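/- (Correctness of eliminating unnecessary rules.) Let P be a term rewriting system, t a term, and ρ = (l → r) a rule of P whose defined symbol (the root symbol of l) neither occurs in t nor is reachable in the needs graph of P by a directed path from a vertex representing a symbol occurring in t. Then ρ is never applicable in any rewrite sequence starting from t: for all terms s, u with t →*_P s, no subterm of s is an instance of l. Consequently the sets of reducts of t under P and under P \ {ρ} coincide, and t has the same normal forms with respect to P and with respect to P \ {ρ}. -/

import Mathlib

/-- First-order terms over a signature `σ` (function symbols and constants,
where constants are symbols applied to the empty argument list) and
variables `ν`. -/
inductive Term (σ ν : Type) : Type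
  | var : ν → Term σ ν
  | app : σ → List (Term σ ν) → Term σ ν

namespace Term

variable {σ ν : Type}

/-- Applying a substitution to a term. -/
def subst (θ : ν → Term σ ν) : Term σ ν → Term σ ν
  | .var v => θ v
  | .app f ts => .app f (ts.attach.map fun x => subst θ x.1)
  decreasing_by have := List.sizeOf_lt_of_mem x.2; simp at this ⊢; omega

/-- The set of function symbols and constants occurring in a term. -/
def symbols : Term σ ν → Set σ
  | .var _ => ∅
  | .app f ts => {f} ∪ (ts.attach.map fun x => symbols x.1).foldr (· ∪ ·) ∅
  decreasing_by have := List.sizeOf_lt_of_mem x.2; simp at this ⊢; omega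

/-- The set of variables occurring in a term. -/
def vars : Term σ ν → Set ν
  | .var v => {v}
  | .app _ ts => (ts.attach.map fun x => vars x.1).foldr (· ∪ ·) ∅
  decreasing_by have := List.sizeOf_lt_of_mem x.2; simp at this ⊢; omega

/-- The outermost (root) symbol of a term, if any. -/
def root : Term σ ν → Option σ
  | .var _ => none
  | .app f _ => some f

/-- `u.IsSubtermOf t` holds when `u` is a (not necessarily proper) subterm of `t`. -/
inductive IsSubtermOf : Term σ ν → Term σ ν → Prop
  | refl (t : Term σ ν) : IsSubtermOf t t
  | arg {u t : Term σ ν} {f : σ} {ts : List (Term σ ν)} :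
      t ∈ ts → IsSubtermOf u t → IsSubtermOf u (.app f ts)

theorem mem_foldr_union {α : Type} {x : α} {L : List (Set α)} :
    x ∈ L.foldr (· ∪ ·) ∅ ↔ ∃ s ∈ L, x ∈ s := by
  induction L with
  | nil => simp
  | cons h t ih => simp [ih]

theorem mem_symbols_app {g f : σ} {ts : List (Term σ ν)} :
    g ∈ (Term.app f ts).symbols ↔ g = f ∨ ∃ u ∈ ts, g ∈ u.symbols := by
  rw [symbols]
  simp [mem_foldr_union]

theorem mem_vars_app {v : ν} {f : σ} {ts : List (Term σ ν)} :
    v ∈ (Term.app f ts).vars ↔ ∃ u ∈ ts, v ∈ u.vars := by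
  rw [vars]
  simp [mem_foldr_union]

theorem subst_app {θ : ν → Term σ ν} {f : σ} {ts : List (Term σ ν)} :
    (Term.app f ts).subst θ = Term.app f (ts.map (subst θ)) := by
  rw [subst]
  congr 1
  simp

theorem mem_symbols_subst {θ : ν → Term σ ν} {g : σ} :
    ∀ t : Term σ ν, (g ∈ (t.subst θ).symbols ↔
      g ∈ t.symbols ∨ ∃ v ∈ t.vars, g ∈ (θ v).symbols)
  | .var v => by simp [subst, symbols, vars]
  | .app f ts => by
    rw [subst_app]
    rw [mem_symbols_app (ts := ts.map (subst θ)), mem_symbols_app]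
    simp only [List.mem_map, mem_vars_app]
    constructor
    · rintro (rfl | ⟨u, ⟨w, hw, rfl⟩, hg⟩)
      · exact Or.inl (Or.inl rfl)
      · rcases (mem_symbols_subst w).1 hg with h | ⟨v, hv, hv2⟩
        · exact Or.inl (Or.inr ⟨w, hw, h⟩)
        · exact Or.inr ⟨v, ⟨w, hw, hv⟩, hv2⟩
    · rintro ((rfl | ⟨w, hw, hg⟩) | ⟨v, ⟨w, hw, hv⟩, hv2⟩)
      · exact Or.inl rfl
      · exact Or.inr ⟨_, ⟨w, hw, rfl⟩, (mem_symbols_subst w).2 (Or.inl hg)⟩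
      · exact Or.inr ⟨_, ⟨w, hw, rfl⟩, (mem_symbols_subst w).2 (Or.inr ⟨v, hv, hv2⟩)⟩
  termination_by t => sizeOf t
  decreasing_by all_goals (have := List.sizeOf_lt_of_mem hw; simp at this ⊢; omega)

end Term

/-- A rewrite rule `l → r`: `l` is not a variable and every variable of `r`
occurs in `l`. -/
structure Rule (σ ν : Type) where
  lhs : Term σ ν
  rhs : Term σ ν
  lhs_not_var : ∀ v, lhs ≠ .var v
  vars_subset : rhs.vars ⊆ lhs.vars

/-- A term rewriting system: a finite set (list) of rules. -/
structure TRS (σ ν : Type) where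
  rules : List (Rule σ ν)

namespace TRS

variable {σ ν : Type}

/-- The one-step rewrite relation of `P`: replace an instance `lσ` of a
left-hand side, occurring as a subterm, by the corresponding instance `rσ`. -/
inductive Rewrite (P : TRS σ ν) : Term σ ν → Term σ ν → Prop
  | root {ρ : Rule σ ν} (hρ : ρ ∈ P.rules) (θ : ν → Term σ ν) :
      Rewrite P (ρ.lhs.subst θ) (ρ.rhs.subst θ)
  | congr {s t : Term σ ν} (f : σ) (pre post : List (Term σ ν)) :
      Rewrite P s t →
      Rewrite P (.app f (pre ++ s :: post)) (.app f (pre ++ t :: post))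

/-- A symbol is defined if it is the outermost symbol of the left-hand side
of some rule. -/
def Defined (P : TRS σ ν) (f : σ) : Prop :=
  ∃ ρ ∈ P.rules, ρ.lhs.root = some f

/-- Edge `f ⟶ g` of the needs graph: `f` is the root (defined) symbol of the
left-hand side of some rule whose right-hand side contains `g`. -/
def NeedsEdge (P : TRS σ ν) (f g : σ) : Prop :=
  ∃ ρ ∈ P.rules, ρ.lhs.root = some f ∧ g ∈ ρ.rhs.symbols

/-- A term is in normal form if no subterm of it is an instance of the
left-hand side of a rule of `P`. -/
def NormalForm (P : TRS σ ν) (s : Term σ ν) : Prop :=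
  ∀ u : Term σ ν, u.IsSubtermOf s → ∀ ρ ∈ P.rules, ∀ θ : ν → Term σ ν, u ≠ ρ.lhs.subst θ

end TRS

theorem Term.root_subst {σ ν : Type} {θ : ν → Term σ ν} {l : Term σ ν} {f : σ}
    (h : l.root = some f) : (l.subst θ).root = some f := by
  cases l with
  | var v => simp [Term.root] at h
  | app g ts => rw [Term.subst_app]; simpa [Term.root] using h

theorem Term.symbols_subset_of_subterm {σ ν : Type} {u s : Term σ ν}
    (h : u.IsSubtermOf s) : u.symbols ⊆ s.symbols := by
  induction h with
  | refl => exact subset_rfl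
  | arg hmem _ ih =>
    intro g hg
    exact Term.mem_symbols_app.2 (Or.inr ⟨_, hmem, ih hg⟩)

theorem TRS.rewrite_exists_redex {σ ν : Type} {P : TRS σ ν} {s s' : Term σ ν}
    (h : P.Rewrite s s') :
    ∃ ρ ∈ P.rules, ∃ θ : ν → Term σ ν, (ρ.lhs.subst θ).IsSubtermOf s := by
  induction h with
  | root hρ θ => exact ⟨_, hρ, θ, .refl _⟩
  | congr f pre post _ ih =>
    obtain ⟨ρ, hρ, θ, hsub⟩ := ih
    exact ⟨ρ, hρ, θ, .arg (by simp) hsub⟩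

theorem TRS.rewrite_transfer {σ ν : Type} {P P' : TRS σ ν} {s s' : Term σ ν}
    (h : P.Rewrite s s')
    (hP : ∀ r ∈ P.rules, ∀ θ : ν → Term σ ν,
        (r.lhs.subst θ).IsSubtermOf s → r ∈ P'.rules) :
    P'.Rewrite s s' := by
  induction h with
  | root hρ θ => exact .root (hP _ hρ θ (.refl _)) θ
  | congr f pre post h ih =>
    exact .congr f pre post (ih fun r hr θ hsub => hP r hr θ (.arg (by simp) hsub))

theorem TRS.rewrite_mono {σ ν : Type} {P P' : TRS σ ν} {s s' : Term σ ν}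
    (hsub : ∀ r ∈ P'.rules, r ∈ P.rules) (h : P'.Rewrite s s') : P.Rewrite s s' :=
  TRS.rewrite_transfer h fun r hr _ _ => hsub r hr

/-- Key invariant preservation: a rewrite step only introduces symbols that are
needed (via an edge of the needs graph) by symbols already present. -/
theorem TRS.good_step {σ ν : Type} {P : TRS σ ν} {t : Term σ ν} {s s' : Term σ ν}
    (h : P.Rewrite s s')
    (hs : ∀ g ∈ s.symbols, g ∈ t.symbols ∨ ∃ a ∈ t.symbols, Relation.TransGen P.NeedsEdge a g) :
    ∀ g ∈ s'.symbols, g ∈ t.symbols ∨ ∃ a ∈ t.symbols, Relation.TransGen P.NeedsEdge a g := by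
  induction h with
  | @root ρ' hρ' θ =>
    intro g hg
    rcases (Term.mem_symbols_subst _).1 hg with hg | ⟨v, hv, hv2⟩
    · -- g occurs in rhs of ρ'; root symbol of lhs is good and has an edge to g
      obtain ⟨f', ts', hl⟩ : ∃ f' ts', ρ'.lhs = .app f' ts' := by
        cases hlhs : ρ'.lhs with
        | var v => exact absurd hlhs (ρ'.lhs_not_var v)
        | app f' ts' => exact ⟨f', ts', rfl⟩
      have hedge : P.NeedsEdge f' g := ⟨ρ', hρ', by rw [hl]; rfl, hg⟩
      have hf'mem : f' ∈ (ρ'.lhs.subst θ).symbols := by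
        rw [Term.mem_symbols_subst]
        exact Or.inl (by rw [hl]; exact Term.mem_symbols_app.2 (Or.inl rfl))
      rcases hs f' hf'mem with hf' | ⟨a, ha, htrans⟩
      · exact Or.inr ⟨f', hf', Relation.TransGen.single hedge⟩
      · exact Or.inr ⟨a, ha, htrans.tail hedge⟩
    · -- g comes from the substitution, hence occurs already in lhs instance
      have : g ∈ (ρ'.lhs.subst θ).symbols := by
        rw [Term.mem_symbols_subst]
        exact Or.inr ⟨v, ρ'.vars_subset hv, hv2⟩
      exact hs g this
  | @congr a b f pre post hab ih =>
    intro g hg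
    rcases Term.mem_symbols_app.1 hg with rfl | ⟨u, hu, hgu⟩
    · exact hs g (Term.mem_symbols_app.2 (Or.inl rfl))
    · rcases (by simpa using hu : u ∈ pre ∨ u = b ∨ u ∈ post) with h1 | rfl | h3
      · exact hs g (Term.mem_symbols_app.2 (Or.inr ⟨u, by simp [h1], hgu⟩))
      · exact ih (fun g' hg' => hs g' (Term.mem_symbols_app.2 (Or.inr ⟨a, by simp, hg'⟩))) g hgu
      · exact hs g (Term.mem_symbols_app.2 (Or.inr ⟨u, by simp [h3], hgu⟩))

/-- A rule `ρ` whose defined symbol `f` neither occurs in `t`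
nor is reachable in the needs graph of `P` from any symbol of `t` is never
applicable in any rewrite sequence starting from `t`; consequently the reducts
of `t` under `P` and under `P \\ {ρ}` coincide, and `t` has the same normal
forms with respect to both systems. -/
theorem unnecessary_rule_elimination {σ ν : Type} (P P' : TRS σ ν)
    (t : Term σ ν) (ρ : Rule σ ν) (hρ : ρ ∈ P.rules) (f : σ)
    (hf : ρ.lhs.root = some f)
    (hnotocc : f ∉ t.symbols)
    (hnotreach : ¬ ∃ a ∈ t.symbols, Relation.TransGen P.NeedsEdge a f)
    (hP' : ∀ r : Rule σ ν, r ∈ P'.rules ↔ r ∈ P.rules ∧ r ≠ ρ) :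
    (∀ s : Term σ ν, Relation.ReflTransGen P.Rewrite t s →
        ∀ u : Term σ ν, u.IsSubtermOf s → ∀ θ : ν → Term σ ν, u ≠ ρ.lhs.subst θ) ∧
    (∀ s : Term σ ν,
        Relation.ReflTransGen P.Rewrite t s ↔ Relation.ReflTransGen P'.Rewrite t s) ∧
    (∀ s : Term σ ν,
        (Relation.ReflTransGen P.Rewrite t s ∧ P.NormalForm s) ↔
          (Relation.ReflTransGen P'.Rewrite t s ∧ P'.NormalForm s)) := by

  have hgood : ∀ s : Term σ ν, Relation.ReflTransGen P.Rewrite t s →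
      ∀ g ∈ s.symbols, g ∈ t.symbols ∨ ∃ a ∈ t.symbols, Relation.TransGen P.NeedsEdge a g := by
    intro s hs
    induction hs with
    | refl => intro g hg; exact Or.inl hg
    | tail _ hstep ih => exact TRS.good_step hstep ih
  have part1 : ∀ s : Term σ ν, Relation.ReflTransGen P.Rewrite t s →
      ∀ u : Term σ ν, u.IsSubtermOf s → ∀ θ : ν → Term σ ν, u ≠ ρ.lhs.subst θ := by
    intro s hs u hu θ heq
    have hfroot : f ∈ u.symbols := by
      subst heq
      rw [Term.mem_symbols_subst]
      left
      cases hl : ρ.lhs with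
      | var v => exact absurd hl (ρ.lhs_not_var v)
      | app f' ts' =>
        have hff : f' = f := by rw [hl] at hf; simpa [Term.root] using hf
        subst hff
        exact Term.mem_symbols_app.2 (Or.inl rfl)
    have hfs : f ∈ s.symbols := Term.symbols_subset_of_subterm hu hfroot
    rcases hgood s hs f hfs with h | h
    · exact hnotocc h
    · exact hnotreach h
  have subP' : ∀ r ∈ P'.rules, r ∈ P.rules := fun r hr => ((hP' r).1 hr).1
  have part2 : ∀ s : Term σ ν,
      Relation.ReflTransGen P.Rewrite t s ↔ Relation.ReflTransGen P'.Rewrite t s := by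
    intro s
    constructor
    · intro hs
      induction hs with
      | refl => exact .refl
      | tail hts hstep ih =>
        refine ih.tail (TRS.rewrite_transfer hstep ?_)
        intro r hr θ hsub
        rw [hP']
        refine ⟨hr, ?_⟩
        rintro rfl
        exact part1 _ hts _ hsub θ rfl
    · intro hs
      exact Relation.ReflTransGen.mono (fun _ _ h => TRS.rewrite_mono subP' h) _ _ hs
  refine ⟨part1, part2, ?_⟩
  intro s
  constructor
  · rintro ⟨hs, hnf⟩
    exact ⟨(part2 s).1 hs, fun u hu r hr θ => hnf u hu r (subP' r hr) θ⟩
  · rintro ⟨hs, hnf⟩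
    have hsP := (part2 s).2 hs
    refine ⟨hsP, fun u hu r hr θ heq => ?_⟩
    by_cases hrρ : r = ρ
    · subst hrρ; exact part1 s hsP u hu θ heq
    · exact hnf u hu r ((hP' r).2 ⟨hr, hrρ⟩) θ heq
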